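/- Let D ⊆ C be a subobject-closed full additive subcategory. Then for every object X of C there is a smallest subobject U ⊆ X with X/U ∈ D, and the inclusion functor D → C admits a left adjoint sending X to X/U. -/

import Mathlib

open CategoryTheory CategoryTheory.Limits ZeroObject

universe w v u

namespace BrauerThrall

/-- A character for an additive category `D` (with zero morphisms):
a function on objects, additive on biproducts and subadditive on
right exact sequences `X → Y → Z → 0` (`Z` a cokernel of `X → Y`). -/
structure Character (D : Type u) [Category.{v} D] [HasZeroMorphisms D] where
  toFun : D → ℕ
  additive : ∀ (X Y : D) (b : BinaryBicone X Y), b.IsBilimit → toFun b.pt = toFun X + toFun Y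
  subadditive : ∀ ⦃X Y : D⦄ (f : X ⟶ Y) (c : CokernelCofork f), IsColimit c →
    toFun Y ≤ toFun X + toFun c.pt

variable {D : Type u} [Category.{v} D] [HasZeroMorphisms D]

/-- A character is irreducible if it is nonzero and not the sum of two nonzero characters. -/
def Character.IsIrreducible (χ : Character D) : Prop :=
  χ.toFun ≠ 0 ∧ ¬ ∃ φ ψ : Character D, φ.toFun ≠ 0 ∧ ψ.toFun ≠ 0 ∧
    ∀ X : D, χ.toFun X = φ.toFun X + ψ.toFun X

/-- `Sp D`, the set of irreducible characters. -/
def Sp (D : Type u) [Category.{v} D] [HasZeroMorphisms D] : Type u :=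
  {χ : Character D // χ.IsIrreducible}

variable {C : Type u} [Category.{v} C] [Abelian C]

/-- For a morphism `α : X ⟶ Y`, `χ(α) = χ(X) - χ(Y) + χ(Coker α)`. -/
noncomputable def Character.eval (χ : Character C) {X Y : C} (α : X ⟶ Y) : ℤ :=
  (χ.toFun X : ℤ) - χ.toFun Y + χ.toFun (cokernel α)

variable (C) in
/-- The basic open subsets `U_α` of `Sp C`. -/
def spBasis : Set (Set (Sp C)) :=
  {U | ∃ (X Y : C) (α : X ⟶ Y), U = {χ : Sp C | χ.1.eval α ≠ 0}}

variable (C) in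
/-- The Ziegler-type topology on `Sp C`, generated by the sets `U_α`. -/
noncomputable def spTopology : TopologicalSpace (Sp C) :=
  TopologicalSpace.generateFrom (spBasis C)

/-- `χ` is the character `χ_M` of the object `M`, i.e. `χ(X)` is the length of
`Hom(X, M)` as a module over `End(M)` (the length of a module being the
supremum of the lengths of chains of submodules). -/
def IsCharOf (χ : Character C) (M : C) : Prop :=
  ∀ X : C, ((χ.toFun X : ℕ∞) : WithBot ℕ∞) = Order.krullDim (Submodule (End M) (X ⟶ M))

/-- A morphism `φ : M ⟶ N` is left almost split if it is not a split monomorphism and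
every non-split-monomorphism out of `M` factors through it. -/
def IsLeftAlmostSplit {M N : C} (φ : M ⟶ N) : Prop :=
  ¬ IsSplitMono φ ∧ ∀ (N' : C) (g : M ⟶ N'), ¬ IsSplitMono g → ∃ h : N ⟶ N', φ ≫ h = g

variable (C) in
/-- The standard hypotheses: `C` is a length category (all objects are noetherian and
artinian), `Hom`-finite over `k`, with finitely many simple objects up to isomorphism. -/
def LengthCategory (k : Type w) [CommRing k] [Linear k C] : Prop :=
  (∀ X : C, IsNoetherianObject X) ∧ (∀ X : C, IsArtinianObject X) ∧
  (∀ X Y : C, IsFiniteLength k (X ⟶ Y)) ∧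
  (∃ (n : ℕ) (f : Fin n → C), ∀ X : C, Simple X → ∃ i, Nonempty (X ≅ f i))

/-- A full subcategory of a preadditive category is preadditive. -/
instance fullSubcategoryPreadditive {E : Type u} [Category.{v} E] [Preadditive E]
    (P : E → Prop) : Preadditive (ObjectProperty.FullSubcategory P) where
  homGroup X Y := InducedCategory.homEquiv.addCommGroup
  add_comp _ _ _ f f' g := by ext; exact Preadditive.add_comp _ _ _ _ _ _
  comp_add _ _ _ f g g' := by ext; exact Preadditive.comp_add _ _ _ _ _ _

variable {C : Type u} [Category.{v} C] [Abelian C]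

variable (C) in
/-- A subobject-closed full additive subcategory of `C`, given by its class of
objects: it contains `0`, is closed under finite direct sums, and contains every
subobject of each of its objects. -/
def IsSubobjectClosedSubcat (D : Set C) : Prop :=
  (0 : C) ∈ D ∧ (∀ X Y : C, X ∈ D → Y ∈ D → (X ⊞ Y) ∈ D) ∧
    ∀ (X Y : C) (f : X ⟶ Y), Mono f → Y ∈ D → X ∈ D

/-- The image of `Sp D` in `Sp C`, for a subobject-closed subcategory `D ⊆ C` with
`p : C ⥤ D` the left adjoint of the inclusion: the irreducible characters of the form
`χ ∘ p` with `χ` an irreducible character for `D`. -/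
def pushSet (D : Set C) (p : C ⥤ ObjectProperty.FullSubcategory (· ∈ D)) : Set (Sp C) :=
  {χ : Sp C | ∃ ψ : Character (ObjectProperty.FullSubcategory (· ∈ D)), ψ.IsIrreducible ∧
    ∀ X : C, χ.1.toFun X = ψ.toFun (p.obj X)}

variable (C) in
/-- A subset `U ⊆ Sp C` is subobject-closed if `U = Sp D` for some subobject-closed
additive subcategory `D ⊆ C` (identified with a subset of `Sp C` via `χ ↦ χ ∘ p`). -/
def IsSubobjectClosedSubset (U : Set (Sp C)) : Prop :=
  ∃ D : Set C, IsSubobjectClosedSubcat C D ∧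
    ∃ (p : C ⥤ ObjectProperty.FullSubcategory (· ∈ D)) (_ : p ⊣ ObjectProperty.ι (· ∈ D)),
      U = pushSet D p

/-- `sub χ`: the intersection of all subobject-closed subsets of `Sp C` containing
`χ`. -/
def subChar (χ : Sp C) : Set (Sp C) :=
  ⋂₀ {U : Set (Sp C) | IsSubobjectClosedSubset C U ∧ χ ∈ U}
/-- `D` is closed under isomorphism. -/
lemma memD_of_iso {D : Set C} (hD : IsSubobjectClosedSubcat C D) {A B : C}
    (e : A ≅ B) (hB : B ∈ D) : A ∈ D :=
  hD.2.2 A B e.hom inferInstance hB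

/-- If `g : X ⟶ T` with `T ∈ D`, then the coimage of `g`, presented as the cokernel of
the arrow of the kernel subobject, lies in `D`. -/
lemma coker_kernelSubobject_mem {D : Set C} (hD : IsSubobjectClosedSubcat C D)
    {X T : C} (g : X ⟶ T) (hT : T ∈ D) :
    cokernel (kernelSubobject g).arrow ∈ D := by
  have e1 : cokernel (kernelSubobject g).arrow ≅ cokernel (kernel.ι g) :=
    cokernelIsoOfEq (kernelSubobject_arrow g).symm ≪≫
      cokernelEpiComp (kernelSubobjectIso g).hom (kernel.ι g)
  have φ : cokernel (kernelSubobject g).arrow ⟶ T :=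
    e1.hom ≫ (Abelian.coimageIsoImage g).hom ≫ Abelian.image.ι g
  exact hD.2.2 _ T (e1.hom ≫ (Abelian.coimageIsoImage g).hom ≫ Abelian.image.ι g)
    inferInstance hT

/-- If `W.arrow ≫ cokernel.π U.arrow = 0` then `W ≤ U`. -/
lemma le_of_comp_cokernelπ_zero {X : C} {U W : Subobject X}
    (h : W.arrow ≫ cokernel.π U.arrow = 0) : W ≤ U := by
  have hk : IsLimit (KernelFork.ofι U.arrow
      (CokernelCofork.condition (CokernelCofork.ofπ (cokernel.π U.arrow)
        (cokernel.condition U.arrow)))) :=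
    Abelian.monoIsKernelOfCokernel _ (cokernelIsCokernel U.arrow)
  obtain ⟨l, hl⟩ := KernelFork.IsLimit.lift' hk W.arrow h
  exact Subobject.le_of_comm l hl

/-- For a subobject-closed full additive subcategory `D ⊆ C`, every object `X` of `C`
has a smallest subobject `U ⊆ X` with `X/U ∈ D`, and the inclusion `D ⥤ C` admits a
left adjoint sending `X` to `X/U`. -/
theorem statement9 (k : Type w) [CommRing k] [Linear k C]
    (hNoeth : ∀ X : C, IsNoetherianObject X) (hArt : ∀ X : C, IsArtinianObject X)
    (hHom : ∀ X Y : C, IsFiniteLength k (X ⟶ Y))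
    (D : Set C) (hD : IsSubobjectClosedSubcat C D) :
    (∀ X : C, ∃ U : Subobject X, cokernel U.arrow ∈ D ∧
      ∀ V : Subobject X, cokernel V.arrow ∈ D → U ≤ V) ∧
    ∃ (p : C ⥤ ObjectProperty.FullSubcategory (· ∈ D)) (_ : p ⊣ ObjectProperty.ι (· ∈ D)),
      ∀ (X : C) (U : Subobject X), cokernel U.arrow ∈ D →
        (∀ V : Subobject X, cokernel V.arrow ∈ D → U ≤ V) →
        Nonempty ((p.obj X).obj ≅ cokernel U.arrow) := by
  have part1 : ∀ X : C, ∃ U : Subobject X, cokernel U.arrow ∈ D ∧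
      ∀ V : Subobject X, cokernel V.arrow ∈ D → U ≤ V := by
    intro X
    have htop : cokernel (⊤ : Subobject X).arrow ∈ D :=
      memD_of_iso hD (cokernel.ofEpi _) hD.1
    obtain ⟨U₀, hU₀S, hmin⟩ :=
      (haveI := hArt X; wellFounded_lt (α := Subobject X)).has_min
        {V : Subobject X | cokernel V.arrow ∈ D} ⟨⊤, htop⟩
    refine ⟨U₀, hU₀S, fun V hV => ?_⟩
    set g : X ⟶ cokernel U₀.arrow ⊞ cokernel V.arrow :=
      biprod.lift (cokernel.π U₀.arrow) (cokernel.π V.arrow) with hg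
    have hW : cokernel (kernelSubobject g).arrow ∈ D :=
      coker_kernelSubobject_mem hD g (hD.2.1 _ _ hU₀S hV)
    have hWU : kernelSubobject g ≤ U₀ := by
      refine le_of_comp_cokernelπ_zero ?_
      rw [← biprod.lift_fst (cokernel.π U₀.arrow) (cokernel.π V.arrow), ← hg,
        ← Category.assoc, kernelSubobject_arrow_comp, zero_comp]
    have hWV : kernelSubobject g ≤ V := by
      refine le_of_comp_cokernelπ_zero ?_
      rw [← biprod.lift_snd (cokernel.π U₀.arrow) (cokernel.π V.arrow), ← hg,
        ← Category.assoc, kernelSubobject_arrow_comp, zero_comp]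
    have heq : kernelSubobject g = U₀ :=
      hWU.lt_or_eq.resolve_left (hmin _ hW)
    rw [← heq]
    exact hWV
  refine ⟨part1, ?_⟩
  choose U hU1 hU2 using part1
  have hzero : ∀ (X : C) (Y : ObjectProperty.FullSubcategory (· ∈ D)) (f : X ⟶ Y.obj),
      (U X).arrow ≫ f = 0 := by
    intro X Y f
    have hle : U X ≤ kernelSubobject f :=
      hU2 X _ (coker_kernelSubobject_mem hD f Y.property)
    rw [← Subobject.ofLE_arrow hle, Category.assoc, kernelSubobject_arrow_comp,
      comp_zero]
  let F_obj : C → ObjectProperty.FullSubcategory (· ∈ D) := fun X => ⟨cokernel (U X).arrow, hU1 X⟩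
  let e : ∀ (X : C) (Y : ObjectProperty.FullSubcategory (· ∈ D)),
      (F_obj X ⟶ Y) ≃ (X ⟶ (ObjectProperty.ι (· ∈ D)).obj Y) := fun X Y =>
    { toFun := fun h => cokernel.π (U X).arrow ≫ h.hom
      invFun := fun f => ObjectProperty.homMk (cokernel.desc (U X).arrow f (hzero X Y f))
      left_inv := fun h => by
        apply ObjectProperty.hom_ext
        apply (cancel_epi (cokernel.π (U X).arrow)).1
        simp
      right_inv := fun f => by simp }
  have he : ∀ (X : C) (Y Y' : ObjectProperty.FullSubcategory (· ∈ D)) (g : Y ⟶ Y') (h : F_obj X ⟶ Y),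
      e X Y' (h ≫ g) = e X Y h ≫ (ObjectProperty.ι (· ∈ D)).map g := by
    intro X Y Y' g h
    simp only [e, Equiv.coe_fn_mk, Category.assoc]
    rfl
  refine ⟨Adjunction.leftAdjointOfEquiv e he, Adjunction.adjunctionOfEquivLeft e he,
    ?_⟩
  intro X V hV hVmin
  have heq : U X = V := le_antisymm (hU2 X V hV) (hVmin (U X) (hU1 X))
  subst heq
  exact ⟨Iso.refl _⟩

end BrauerThrall
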